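/- Let B₁, B₂ : H → H both be Lipschitz with constant L, suppose L · C_T < 1, and assume sup_{v ∈ H} ‖B₁(v) − B₂(v)‖ ≤ ε for some ε ≥ 0. Let z₁ and z₂ be the fixed points in C([0,T]; H) of the Picard maps built from B₁ and B₂ respectively, with the same initial datum z₀. Then sup_{t ∈ [0,T]} ‖z₁(t) − z₂(t)‖ ≤ (C_T · ε) / (1 − L · C_T). In particular the mild solution depends stably on the forcing operator, which identifies the limit of the discrete mild solutions with the mean-field mild solution when the forcings converge uniformly. -/

import Mathlib

open MeasureTheory Filter Topology

/-- The Picard map `Φ(z)(t) = S(t) z₀ + ∫₀ᵗ S(t−s)(B(z(s))) ds`. -/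
noncomputable def picardMap {H : Type*} [NormedAddCommGroup H] [InnerProductSpace ℝ H]
    [CompleteSpace H] (S : ℝ → H →L[ℝ] H) (B : H → H) (z₀ : H) (z : ℝ → H) (t : ℝ) : H :=
  S t z₀ + ∫ s in (0:ℝ)..t, S (t - s) (B (z s))

/-- Strongly continuous bounded operator family applied to a continuous function
is continuous. -/
lemma aux_cont_apply {H : Type*} [NormedAddCommGroup H] [NormedSpace ℝ H]
    (S : ℝ → H →L[ℝ] H) (K : Set ℝ) (M : ℝ)
    (hS_cont : ∀ x : H, ContinuousOn (fun t => S t x) K)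
    (hS_bd : ∀ t ∈ K, ‖S t‖ ≤ M)
    (g : ℝ → H) (J : Set ℝ) (hg : ContinuousOn g J) (t : ℝ)
    (hmap : ∀ s ∈ J, t - s ∈ K) :
    ContinuousOn (fun s => S (t - s) (g s)) J := by
  intro s₀ hs₀
  have hG : ContinuousWithinAt (fun s => S (t - s) (g s₀)) J s₀ := by
    have hc : ContinuousOn (fun s : ℝ => t - s) J :=
      (continuous_const.sub continuous_id).continuousOn
    exact ((hS_cont (g s₀)).comp hc hmap) s₀ hs₀
  have hnorm : Tendsto (fun s => M * ‖g s - g s₀‖) (𝓝[J] s₀) (𝓝 0) := by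
    have h1 : Tendsto (fun s => g s - g s₀) (𝓝[J] s₀) (𝓝 0) := by
      have h0 := Filter.Tendsto.sub (hg s₀ hs₀) (tendsto_const_nhds (x := g s₀))
      rwa [sub_self] at h0
    have h2 : Tendsto (fun s => ‖g s - g s₀‖) (𝓝[J] s₀) (𝓝 0) := by
      simpa using h1.norm
    simpa using h2.const_mul M
  have key : Tendsto (fun s => S (t - s) (g s) - S (t - s) (g s₀)) (𝓝[J] s₀) (𝓝 0) := by
    refine squeeze_zero_norm' ?_ hnorm
    filter_upwards [self_mem_nhdsWithin] with s hs
    have heq : S (t - s) (g s) - S (t - s) (g s₀) = S (t - s) (g s - g s₀) := by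
      simp [map_sub]
    rw [heq]
    calc ‖S (t - s) (g s - g s₀)‖ ≤ ‖S (t - s)‖ * ‖g s - g s₀‖ :=
          (S (t - s)).le_opNorm _
      _ ≤ M * ‖g s - g s₀‖ :=
          mul_le_mul_of_nonneg_right (hS_bd _ (hmap s hs)) (norm_nonneg _)
  have hfin : Tendsto (fun s => (S (t - s) (g s) - S (t - s) (g s₀)) + S (t - s) (g s₀))
      (𝓝[J] s₀) (𝓝 (0 + S (t - s₀) (g s₀))) := key.add hG
  simpa [ContinuousWithinAt] using hfin

/-- If `B₁, B₂` are both `L`-Lipschitz, `L·C_T < 1`, and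
`‖B₁(v) − B₂(v)‖ ≤ ε` for all `v`, then the corresponding fixed points `z₁, z₂`
of the Picard maps (same initial datum `z₀`) satisfy
`sup_{t∈[0,T]} ‖z₁(t) − z₂(t)‖ ≤ C_T·ε / (1 − L·C_T)`. -/
theorem picard_fixed_point_stability
    {H : Type*} [NormedAddCommGroup H] [InnerProductSpace ℝ H] [CompleteSpace H]
    (T : ℝ) (hT : 0 < T) (M_S C_T : ℝ)
    (S : ℝ → H →L[ℝ] H)
    (hS_cont : ∀ x : H, ContinuousOn (fun t => S t x) (Set.Icc 0 T))
    (hS_bd : ∀ t ∈ Set.Icc (0:ℝ) T, ‖S t‖ ≤ M_S)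
    (hS_int : IntegrableOn (fun s => ‖S s‖) (Set.Icc (0:ℝ) T))
    (hS_CT : ∀ t ∈ Set.Icc (0:ℝ) T, (∫ s in (0:ℝ)..t, ‖S (t - s)‖) ≤ C_T)
    (B₁ B₂ : H → H) (L : ℝ) (hL : 0 ≤ L)
    (hB₁_lip : ∀ v w : H, ‖B₁ v - B₁ w‖ ≤ L * ‖v - w‖)
    (hB₂_lip : ∀ v w : H, ‖B₂ v - B₂ w‖ ≤ L * ‖v - w‖)
    (hsmall : L * C_T < 1)
    (ε : ℝ) (hε : 0 ≤ ε) (hB_close : ∀ v : H, ‖B₁ v - B₂ v‖ ≤ ε)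
    (z₀ : H) (z₁ z₂ : ℝ → H)
    (hz₁_cont : ContinuousOn z₁ (Set.Icc 0 T))
    (hz₁_fix : ∀ t ∈ Set.Icc (0:ℝ) T, picardMap S B₁ z₀ z₁ t = z₁ t)
    (hz₂_cont : ContinuousOn z₂ (Set.Icc 0 T))
    (hz₂_fix : ∀ t ∈ Set.Icc (0:ℝ) T, picardMap S B₂ z₀ z₂ t = z₂ t) :
    ∀ t ∈ Set.Icc (0:ℝ) T, ‖z₁ t - z₂ t‖ ≤ (C_T * ε) / (1 - L * C_T) := by
  have hCT0 : 0 ≤ C_T :=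
    le_trans (intervalIntegral.integral_nonneg hT.le (fun s _ => norm_nonneg _))
      (hS_CT T ⟨hT.le, le_rfl⟩)
  have hB₁c : Continuous B₁ := by
    refine (LipschitzWith.of_dist_le_mul (K := ⟨L, hL⟩) (f := B₁) ?_).continuous
    intro v w
    rw [dist_eq_norm, dist_eq_norm]; exact hB₁_lip v w
  have hB₂c : Continuous B₂ := by
    refine (LipschitzWith.of_dist_le_mul (K := ⟨L, hL⟩) (f := B₂) ?_).continuous
    intro v w
    rw [dist_eq_norm, dist_eq_norm]; exact hB₂_lip v w
  -- maximum of the difference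
  have hfc : ContinuousOn (fun t => ‖z₁ t - z₂ t‖) (Set.Icc 0 T) :=
    (hz₁_cont.sub hz₂_cont).norm
  obtain ⟨t₀, ht₀, hmax⟩ :=
    isCompact_Icc.exists_isMaxOn (Set.nonempty_Icc.2 hT.le) hfc
  set D := ‖z₁ t₀ - z₂ t₀‖ with hDdef
  have hD0 : 0 ≤ D := norm_nonneg _
  have hDle : ∀ t ∈ Set.Icc (0:ℝ) T, ‖z₁ t - z₂ t‖ ≤ D := fun t ht => hmax ht
  have ht₀0 : (0:ℝ) ≤ t₀ := ht₀.1
  have hsub : Set.Icc (0:ℝ) t₀ ⊆ Set.Icc 0 T := Set.Icc_subset_Icc_right ht₀.2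
  have hmap : ∀ s ∈ Set.Icc (0:ℝ) t₀, t₀ - s ∈ Set.Icc (0:ℝ) T := by
    intro s hs
    exact ⟨by linarith [hs.2], by linarith [hs.1, ht₀.2]⟩
  have huIcc : Set.uIcc (0:ℝ) t₀ = Set.Icc 0 t₀ := Set.uIcc_of_le ht₀0
  -- integrability of the two integrands
  have hc₁ : ContinuousOn (fun s => S (t₀ - s) (B₁ (z₁ s))) (Set.Icc 0 t₀) :=
    aux_cont_apply S (Set.Icc 0 T) M_S hS_cont hS_bd (fun s => B₁ (z₁ s)) _
      (hB₁c.comp_continuousOn (hz₁_cont.mono hsub)) t₀ hmap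
  have hc₂ : ContinuousOn (fun s => S (t₀ - s) (B₂ (z₂ s))) (Set.Icc 0 t₀) :=
    aux_cont_apply S (Set.Icc 0 T) M_S hS_cont hS_bd (fun s => B₂ (z₂ s)) _
      (hB₂c.comp_continuousOn (hz₂_cont.mono hsub)) t₀ hmap
  have hi₁ : IntervalIntegrable (fun s => S (t₀ - s) (B₁ (z₁ s))) volume 0 t₀ := by
    apply ContinuousOn.intervalIntegrable; rwa [huIcc]
  have hi₂ : IntervalIntegrable (fun s => S (t₀ - s) (B₂ (z₂ s))) volume 0 t₀ := by
    apply ContinuousOn.intervalIntegrable; rwa [huIcc]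
  -- integrability of s ↦ ‖S (t₀ - s)‖ on [0, t₀]
  have hSi : IntervalIntegrable (fun s => ‖S (t₀ - s)‖) volume 0 t₀ := by
    have h0 : IntervalIntegrable (fun s => ‖S s‖) volume 0 T :=
      (intervalIntegrable_iff_integrableOn_Icc_of_le hT.le).mpr hS_int
    have h1 : IntervalIntegrable (fun s => ‖S s‖) volume 0 t₀ :=
      h0.mono_set (by rw [huIcc, Set.uIcc_of_le hT.le]; exact hsub)
    have h2 := h1.comp_sub_left t₀
    simpa using h2.symm
  -- the key inequality at the max point
  have key : D ≤ C_T * (L * D + ε) := by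
    have hfix : z₁ t₀ - z₂ t₀ =
        ∫ s in (0:ℝ)..t₀, (S (t₀ - s) (B₁ (z₁ s)) - S (t₀ - s) (B₂ (z₂ s))) := by
      rw [← hz₁_fix t₀ ht₀, ← hz₂_fix t₀ ht₀, picardMap, picardMap,
        intervalIntegral.integral_sub hi₁ hi₂]
      abel
    have hLDε : 0 ≤ L * D + ε := by positivity
    have hbound : ∀ s ∈ Set.Icc (0:ℝ) t₀,
        ‖S (t₀ - s) (B₁ (z₁ s)) - S (t₀ - s) (B₂ (z₂ s))‖ ≤ ‖S (t₀ - s)‖ * (L * D + ε) := by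
      intro s hs
      have heq : S (t₀ - s) (B₁ (z₁ s)) - S (t₀ - s) (B₂ (z₂ s))
          = S (t₀ - s) (B₁ (z₁ s) - B₂ (z₂ s)) := by simp [map_sub]
      rw [heq]
      have h1 : ‖B₁ (z₁ s) - B₂ (z₂ s)‖ ≤ L * D + ε := by
        have := norm_sub_le_norm_sub_add_norm_sub (B₁ (z₁ s)) (B₁ (z₂ s)) (B₂ (z₂ s))
        have h2 := hB₁_lip (z₁ s) (z₂ s)
        have h3 := hB_close (z₂ s)
        have h4 : ‖z₁ s - z₂ s‖ ≤ D := hDle s (hsub hs)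
        nlinarith [norm_nonneg (z₁ s - z₂ s)]
      calc ‖S (t₀ - s) (B₁ (z₁ s) - B₂ (z₂ s))‖
          ≤ ‖S (t₀ - s)‖ * ‖B₁ (z₁ s) - B₂ (z₂ s)‖ := (S (t₀ - s)).le_opNorm _
        _ ≤ ‖S (t₀ - s)‖ * (L * D + ε) :=
            mul_le_mul_of_nonneg_left h1 (norm_nonneg _)
    calc D = ‖∫ s in (0:ℝ)..t₀, (S (t₀ - s) (B₁ (z₁ s)) - S (t₀ - s) (B₂ (z₂ s)))‖ := by
          rw [hDdef, hfix]
      _ ≤ ∫ s in (0:ℝ)..t₀, ‖S (t₀ - s) (B₁ (z₁ s)) - S (t₀ - s) (B₂ (z₂ s))‖ :=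
          intervalIntegral.norm_integral_le_integral_norm ht₀0
      _ ≤ ∫ s in (0:ℝ)..t₀, ‖S (t₀ - s)‖ * (L * D + ε) := by
          apply intervalIntegral.integral_mono_on ht₀0 ((hi₁.sub hi₂).norm)
            (hSi.mul_const _) hbound
      _ = (∫ s in (0:ℝ)..t₀, ‖S (t₀ - s)‖) * (L * D + ε) := by
          rw [intervalIntegral.integral_mul_const]
      _ ≤ C_T * (L * D + ε) :=
          mul_le_mul_of_nonneg_right (hS_CT t₀ ht₀) hLDε
  have halg : D ≤ C_T * ε / (1 - L * C_T) := by
    have h1 : 0 < 1 - L * C_T := by linarith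
    rw [le_div_iff₀ h1]
    nlinarith
  intro t ht
  exact le_trans (hDle t ht) halg
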